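/- Let 𝒜 and 𝒴 be finite sets and r a strictly positive joint probability mass function on 𝒜 × 𝒴, with marginals r_A(a) = Σ_y r(a,y) and r_Y(y) = Σ_a r(a,y), and conditionals q_{Y|A}(y|a) = r(a,y)/r_A(a) and q_{A|Y}(a|y) = r(a,y)/r_Y(y). Then for every n ≥ 1, every a ∈ 𝒜ⁿ, y ∈ 𝒴ⁿ, and every permutation π of {1,…,n}: ∏_{i=1}^n q_{Y|A}(y_{π⁻¹(i)}|a_i) / Σ_{π'} ∏_{i=1}^n q_{Y|A}(y_{π'⁻¹(i)}|a_i) = ∏_{i=1}^n q_{A|Y}(a_{π(i)}|y_i) / Σ_{π'} ∏_{i=1}^n q_{A|Y}(a_{π'(i)}|y_i), where the sums run over all permutations π' of {1,…,n}. -/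

import Mathlib

/-- with a strictly positive joint pmf `r` on `𝒜 × 𝒴`, the ICP distribution on
permutations (weights `∏ i, q_{Y|A}(y_{π⁻¹(i)} | a_i)`, normalized) coincides with the CP
distribution (weights `∏ i, q_{A|Y}(a_{π(i)} | y_i)`, normalized). -/
theorem stmt_2 {𝒜 𝒴 : Type*} [Fintype 𝒜] [Fintype 𝒴]
    (r : 𝒜 → 𝒴 → ℝ) (hr : ∀ a y, 0 < r a y) (hr1 : ∑ a, ∑ y, r a y = 1)
    {n : ℕ} (hn : 1 ≤ n) (a : Fin n → 𝒜) (y : Fin n → 𝒴) (π : Equiv.Perm (Fin n)) :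
    (∏ i, (r (a i) (y (π⁻¹ i)) / ∑ y', r (a i) y')) /
        (∑ π' : Equiv.Perm (Fin n), ∏ i, (r (a i) (y (π'⁻¹ i)) / ∑ y', r (a i) y'))
      = (∏ i, (r (a (π i)) (y i) / ∑ a', r a' (y i))) /
        (∑ π' : Equiv.Perm (Fin n), ∏ i, (r (a (π' i)) (y i) / ∑ a', r a' (y i))) := by
  have h𝒴 : Nonempty 𝒴 := ⟨y ⟨0, hn⟩⟩
  have h𝒜 : Nonempty 𝒜 := ⟨a ⟨0, hn⟩⟩
  set F : Equiv.Perm (Fin n) → ℝ := fun σ => ∏ i, r (a i) (y (σ⁻¹ i)) with hF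
  have key : ∀ σ : Equiv.Perm (Fin n), ∏ i, r (a (σ i)) (y i) = F σ := by
    intro σ
    simp only [hF]
    rw [← Equiv.prod_comp σ (fun i => r (a i) (y (σ⁻¹ i)))]
    simp
  have cA : (0:ℝ) < ∏ i, ∑ y', r (a i) y' :=
    Finset.prod_pos fun i _ => Finset.sum_pos (fun y' _ => hr _ _) Finset.univ_nonempty
  have cY : (0:ℝ) < ∏ i, ∑ a', r a' (y i) :=
    Finset.prod_pos fun i _ => Finset.sum_pos (fun a' _ => hr _ _) Finset.univ_nonempty
  have hFpos : ∀ σ : Equiv.Perm (Fin n), 0 < F σ := fun σ => Finset.prod_pos fun i _ => hr _ _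
  have hSum : 0 < ∑ σ : Equiv.Perm (Fin n), F σ :=
    Finset.sum_pos (fun σ _ => hFpos σ) Finset.univ_nonempty
  have l1 : ∀ σ : Equiv.Perm (Fin n),
      (∏ i, (r (a i) (y (σ⁻¹ i)) / ∑ y', r (a i) y')) = F σ / (∏ i, ∑ y', r (a i) y') :=
    fun σ => Finset.prod_div_distrib _ _
  have l2 : ∀ σ : Equiv.Perm (Fin n),
      (∏ i, (r (a (σ i)) (y i) / ∑ a', r a' (y i))) = F σ / (∏ i, ∑ a', r a' (y i)) := by
    intro σ; rw [Finset.prod_div_distrib, key]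
  have cancel : ∀ c : ℝ, 0 < c →
      (F π / c) / ((∑ σ : Equiv.Perm (Fin n), F σ) / c) = F π / (∑ σ : Equiv.Perm (Fin n), F σ) := by
    intro c hc
    rw [div_div_div_eq, mul_comm c, ← div_div_div_eq, div_self hc.ne', div_one]
  simp only [l1, l2, ← Finset.sum_div]
  rw [cancel _ cA, cancel _ cY]
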